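/- For each 0 ≤ i ≤ d−2, the expression P_{c,a}(c_i), viewed as a polynomial in the variables (c_1,…,c_{d-2},a) with rational coefficients, is homogeneous of degree d; moreover the d−1 polynomials P_{c,a}(c_0), P_{c,a}(c_1), …, P_{c,a}(c_{d-2}) have no common zero in ℂ^{d-1} other than the origin (0,…,0). -/

import Mathlib

open MvPolynomial

noncomputable section

/-- Here `d = N + 2`.  The parameter space has coordinates `c_1, …, c_{d-2}, a`, encoded as the
variables `Fin (N+1)`: for `i : Fin N`, `X i.castSucc` is `c_{i+1}`, and `X (Fin.last N)` is `a`.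
This is the elementary (monic) symmetric polynomial `σ_k(c_1, …, c_{d-2})`. -/
def esymmMv (N k : ℕ) : MvPolynomial (Fin (N + 1)) ℚ :=
  ∑ s ∈ Finset.powersetCard k (Finset.univ : Finset (Fin N)), ∏ i ∈ s, X i.castSucc

/-- The critical point `c_i` (for `0 ≤ i ≤ d-2`), as a polynomial in `(c, a)`:
`c_0 = 0` and `c_i = X_{i-1}` for `i ≥ 1`. -/
def critMv (N : ℕ) (i : Fin (N + 1)) : MvPolynomial (Fin (N + 1)) ℚ :=
  if h : (i : ℕ) = 0 then 0
  else X (Fin.castSucc ⟨(i : ℕ) - 1, by have := i.isLt; omega⟩)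

/-- `P_{c,a}(z) = (1/d) z^d + ∑_{j=2}^{d-1} (-1)^{d-j} σ_{d-j}(c) z^j / j + a^d`, applied to a
polynomial `z` in the parameters, with `d = N + 2`. -/
def PMv (N : ℕ) (z : MvPolynomial (Fin (N + 1)) ℚ) : MvPolynomial (Fin (N + 1)) ℚ :=
  C (1 / ((N : ℚ) + 2)) * z ^ (N + 2)
    + ∑ j ∈ Finset.Icc 2 (N + 1),
        C ((-1 : ℚ) ^ (N + 2 - j) / (j : ℚ)) * esymmMv N (N + 2 - j) * z ^ j
    + (X (Fin.last N)) ^ (N + 2)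

/-! ### Auxiliary lemmas -/

lemma esymmMv_homog (N k : ℕ) : (esymmMv N k).IsHomogeneous k := by
  apply MvPolynomial.IsHomogeneous.sum
  intro s hs
  have hcard := (Finset.mem_powersetCard.mp hs).2
  have h := MvPolynomial.IsHomogeneous.prod s
      (fun i : Fin N => (X i.castSucc : MvPolynomial (Fin (N + 1)) ℚ)) (fun _ => 1)
      (fun i _ => isHomogeneous_X _ _)
  simpa [Finset.sum_const, hcard] using h

lemma critMv_homog (N : ℕ) (i : Fin (N + 1)) : (critMv N i).IsHomogeneous 1 := by
  unfold critMv
  split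
  · exact isHomogeneous_zero _ _ _
  · exact isHomogeneous_X _ _

lemma PMv_homog (N : ℕ) {z : MvPolynomial (Fin (N + 1)) ℚ} (hz : z.IsHomogeneous 1) :
    (PMv N z).IsHomogeneous (N + 2) := by
  unfold PMv
  apply MvPolynomial.IsHomogeneous.add
  apply MvPolynomial.IsHomogeneous.add
  · simpa using (hz.pow (N + 2)).C_mul _
  · apply MvPolynomial.IsHomogeneous.sum
    intro j hj
    have hj' := Finset.mem_Icc.mp hj
    have h1 := ((esymmMv_homog N (N + 2 - j)).mul (hz.pow j)).C_mul
      ((-1 : ℚ) ^ (N + 2 - j) / (j : ℚ))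
    have he : (N + 2 - j) + 1 * j = N + 2 := by omega
    rw [← mul_assoc, he] at h1
    exact h1
  · simpa using (isHomogeneous_X ℚ (Fin.last N)).pow (N + 2)

/-- The evaluated elementary symmetric function. -/
def ee (N : ℕ) (x : Fin (N + 1) → ℂ) (k : ℕ) : ℂ := aeval x (esymmMv N k)

lemma ee_eq (N : ℕ) (x : Fin (N + 1) → ℂ) (k : ℕ) :
    ee N x k = ∑ s ∈ Finset.powersetCard k (Finset.univ : Finset (Fin N)),
      ∏ i ∈ s, x i.castSucc := by
  simp [ee, esymmMv, map_sum, map_prod]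

lemma ee_zero (N : ℕ) (x : Fin (N + 1) → ℂ) : ee N x 0 = 1 := by
  simp [ee_eq]

/-- The one-variable polynomial `P_{c,a}` over `ℂ`, coefficients evaluated at `x`. -/
def qq (N : ℕ) (x : Fin (N + 1) → ℂ) : Polynomial ℂ :=
  Polynomial.C (algebraMap ℚ ℂ (1 / ((N : ℚ) + 2))) * Polynomial.X ^ (N + 2)
    + ∑ j ∈ Finset.Icc 2 (N + 1),
        Polynomial.C (algebraMap ℚ ℂ ((-1 : ℚ) ^ (N + 2 - j) / (j : ℚ)) * ee N x (N + 2 - j))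
          * Polynomial.X ^ j
    + Polynomial.C ((x (Fin.last N)) ^ (N + 2))

lemma aeval_PMv (N : ℕ) (x : Fin (N + 1) → ℂ) (z : MvPolynomial (Fin (N + 1)) ℚ) :
    aeval x (PMv N z) = (qq N x).eval (aeval x z) := by
  simp only [PMv, qq, ee, map_add, map_mul, map_pow, map_sum, MvPolynomial.aeval_C,
    MvPolynomial.aeval_X, Polynomial.eval_add, Polynomial.eval_mul, Polynomial.eval_pow,
    Polynomial.eval_finset_sum, Polynomial.eval_C, Polynomial.eval_X]

lemma deriv_qq (N : ℕ) (x : Fin (N + 1) → ℂ) :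
    (qq N x).derivative
      = Polynomial.X * ∏ i : Fin N, (Polynomial.X - Polynomial.C (x i.castSucc)) := by
  have hNC : ((N : ℂ) + 2) ≠ 0 := by
    have h2 : (((N + 2 : ℕ) : ℂ)) ≠ 0 := Nat.cast_ne_zero.mpr (by omega)
    push_cast at h2; exact h2
  -- the common normal form
  set g : ℕ → Polynomial ℂ := fun k =>
    (-1 : Polynomial ℂ) ^ k * (Polynomial.C (ee N x k) * Polynomial.X ^ (N + 1 - k)) with hg
  have hrange : Finset.range (N + 1) = insert 0 (Finset.Icc 1 N) := by
    ext m; simp only [Finset.mem_range, Finset.mem_insert, Finset.mem_Icc]; omega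
  have hg0 : g 0 = Polynomial.X ^ (N + 1) := by simp [hg, ee_zero]
  -- LHS
  have hconst : algebraMap ℚ ℂ (1 / ((N : ℚ) + 2)) * ((N + 2 : ℕ) : ℂ) = 1 := by
    rw [eq_ratCast]; push_cast; field_simp
  have hd1 : (Polynomial.C (algebraMap ℚ ℂ (1 / ((N : ℚ) + 2)))
        * Polynomial.X ^ (N + 2) : Polynomial ℂ).derivative = Polynomial.X ^ (N + 1) := by
    rw [Polynomial.derivative_C_mul, Polynomial.derivative_X_pow, ← mul_assoc,
      ← Polynomial.C_mul, hconst, Polynomial.C_1, one_mul,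
      show N + 2 - 1 = N + 1 from rfl]
  have hd2 : ∀ j ∈ Finset.Icc 2 (N + 1),
      (Polynomial.C (algebraMap ℚ ℂ ((-1 : ℚ) ^ (N + 2 - j) / (j : ℚ)) * ee N x (N + 2 - j))
        * Polynomial.X ^ j : Polynomial ℂ).derivative = g (N + 2 - j) := by
    intro j hj
    have hj' := Finset.mem_Icc.mp hj
    have hjC : ((j : ℕ) : ℂ) ≠ 0 := Nat.cast_ne_zero.mpr (by omega)
    rw [Polynomial.derivative_C_mul, Polynomial.derivative_X_pow]
    have hcoef : algebraMap ℚ ℂ ((-1 : ℚ) ^ (N + 2 - j) / (j : ℚ)) * ee N x (N + 2 - j)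
          * ((j : ℕ) : ℂ) = (-1 : ℂ) ^ (N + 2 - j) * ee N x (N + 2 - j) := by
      rw [eq_ratCast]; push_cast; field_simp; try ring
    have hexp : j - 1 = N + 1 - (N + 2 - j) := by omega
    calc Polynomial.C (algebraMap ℚ ℂ ((-1 : ℚ) ^ (N + 2 - j) / (j : ℚ)) * ee N x (N + 2 - j))
          * (Polynomial.C ((j : ℕ) : ℂ) * Polynomial.X ^ (j - 1))
        = Polynomial.C (algebraMap ℚ ℂ ((-1 : ℚ) ^ (N + 2 - j) / (j : ℚ)) * ee N x (N + 2 - j)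
            * ((j : ℕ) : ℂ)) * Polynomial.X ^ (j - 1) := by simp only [map_mul]; ring
      _ = Polynomial.C ((-1 : ℂ) ^ (N + 2 - j) * ee N x (N + 2 - j))
            * Polynomial.X ^ (N + 1 - (N + 2 - j)) := by rw [hcoef, hexp]
      _ = g (N + 2 - j) := by
            simp only [hg, map_mul, map_pow, map_neg, map_one]; ring
  have hL : (qq N x).derivative = ∑ k ∈ Finset.range (N + 1), g k := by
    rw [qq, Polynomial.derivative_add, Polynomial.derivative_add, Polynomial.derivative_C,
      add_zero, Polynomial.derivative_sum, hd1, Finset.sum_congr rfl hd2, hrange,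
      Finset.sum_insert (by simp), hg0]
    rw [add_right_inj]
    refine Finset.sum_nbij' (fun j => N + 2 - j) (fun k => N + 2 - k) ?_ ?_ ?_ ?_ ?_
    · intro a ha; have := Finset.mem_Icc.mp ha; simp only [Finset.mem_Icc]; omega
    · intro a ha; have := Finset.mem_Icc.mp ha; simp only [Finset.mem_Icc]; omega
    · intro a ha; have := Finset.mem_Icc.mp ha; omega
    · intro a ha; have := Finset.mem_Icc.mp ha; omega
    · intro a ha; rfl
  -- RHS
  have hR : Polynomial.X * ∏ i : Fin N, (Polynomial.X - Polynomial.C (x i.castSucc))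
      = ∑ k ∈ Finset.range (N + 1), g k := by
    have hs : (Multiset.map (fun t => (Polynomial.X : Polynomial ℂ) - Polynomial.C t)
        (Multiset.map (fun i : Fin N => x i.castSucc) Finset.univ.val)).prod
          = ∏ i : Fin N, (Polynomial.X - Polynomial.C (x i.castSucc)) := by
      rw [Multiset.map_map]; rfl
    have hc : Multiset.card (Multiset.map (fun i : Fin N => x i.castSucc) Finset.univ.val)
        = N := by simp
    rw [← hs, Multiset.prod_X_sub_X_eq_sum_esymm, hc, Finset.mul_sum]
    refine Finset.sum_congr rfl fun k hk => ?_
    have hk' := Finset.mem_range.mp hk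
    have hesymm : (Multiset.map (fun i : Fin N => x i.castSucc) Finset.univ.val).esymm k
        = ee N x k := by
      rw [Finset.esymm_map_val, ee_eq]
    rw [hesymm]
    simp only [hg]
    have hexp : N + 1 - k = (N - k) + 1 := by omega
    rw [hexp, pow_succ]
    ring
  rw [hL, hR]

lemma natDegree_qq (N : ℕ) (x : Fin (N + 1) → ℂ) : (qq N x).natDegree ≤ N + 2 := by
  refine le_trans (Polynomial.natDegree_add_le _ _) ?_
  simp only [max_le_iff]
  refine ⟨le_trans (Polynomial.natDegree_add_le _ _) ?_, by simp⟩
  simp only [max_le_iff]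
  constructor
  · exact le_trans (Polynomial.natDegree_C_mul_le _ _) (by simp)
  · refine Polynomial.natDegree_sum_le_of_forall_le _ _ fun j hj => ?_
    have := Finset.mem_Icc.mp hj
    refine le_trans (Polynomial.natDegree_C_mul_le _ _) ?_
    rw [Polynomial.natDegree_X_pow]
    omega

lemma common_zero (N : ℕ) (x : Fin (N + 1) → ℂ)
    (h : ∀ j : Fin (N + 1), aeval x (PMv N (critMv N j)) = 0) : x = 0 := by
  set q := qq N x with hqdef
  have hq' : q.derivative
      = Polynomial.X * ∏ i : Fin N, (Polynomial.X - Polynomial.C (x i.castSucc)) :=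
    deriv_qq N x
  have hmonic : (Polynomial.X
      * ∏ i : Fin N, (Polynomial.X - Polynomial.C (x i.castSucc)) : Polynomial ℂ).Monic :=
    Polynomial.monic_X.mul
      (Polynomial.monic_prod_of_monic _ _ fun i _ => Polynomial.monic_X_sub_C _)
  have hq'ne : q.derivative ≠ 0 := by rw [hq']; exact hmonic.ne_zero
  have hqne : q ≠ 0 := by
    intro h0; apply hq'ne; rw [h0]; simp
  have hroots' : q.derivative.roots
      = 0 ::ₘ Multiset.map (fun i : Fin N => x i.castSucc) Finset.univ.val := by
    rw [hq', Polynomial.roots_mul (by rw [← hq']; exact hq'ne), Polynomial.roots_X]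
    have hs : (∏ i : Fin N, (Polynomial.X - Polynomial.C (x i.castSucc)) : Polynomial ℂ)
        = (Multiset.map (fun t => (Polynomial.X : Polynomial ℂ) - Polynomial.C t)
            (Multiset.map (fun i : Fin N => x i.castSucc) Finset.univ.val)).prod := by
      rw [Multiset.map_map]; rfl
    rw [hs, Polynomial.roots_multiset_prod_X_sub_C, Multiset.singleton_add]
  -- evaluations
  have heval0 : q.eval 0 = 0 := by
    have h0' := h 0
    rw [aeval_PMv] at h0'
    have h0 : (aeval x) (critMv N 0) = 0 := by simp [critMv]
    rwa [h0] at h0'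
  have hevalc : ∀ i : Fin N, q.eval (x i.castSucc) = 0 := by
    intro i
    have hi' := h i.succ
    rw [aeval_PMv] at hi'
    have hc : (aeval x) (critMv N i.succ) = x i.castSucc := by
      rw [critMv, dif_neg (by simp [Fin.val_succ])]
      rw [MvPolynomial.aeval_X]
      simp only [Fin.val_succ, Nat.add_sub_cancel, Fin.eta]
    rwa [hc] at hi'
  have hroot_mem : ∀ s ∈ q.derivative.roots.toFinset, q.IsRoot s := by
    intro s hs
    rw [Multiset.mem_toFinset, hroots', Multiset.mem_cons] at hs
    rcases hs with rfl | hs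
    · exact heval0
    · obtain ⟨i, -, rfl⟩ := Multiset.mem_map.mp hs
      exact hevalc i
  set S := q.derivative.roots.toFinset with hSdef
  have hsub : S ⊆ q.roots.toFinset := by
    intro s hs
    exact Multiset.mem_toFinset.mpr (Polynomial.mem_roots'.mpr ⟨hqne, hroot_mem s hs⟩)
  have hcount : ∀ s ∈ S, q.roots.count s = q.derivative.roots.count s + 1 := by
    intro s hs
    rw [Polynomial.count_roots, Polynomial.count_roots,
      Polynomial.derivative_rootMultiplicity_of_root (hroot_mem s hs)]
    have : 0 < q.rootMultiplicity s :=
      (Polynomial.rootMultiplicity_pos hqne).mpr (hroot_mem s hs)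
    omega
  have hcard' : Multiset.card q.derivative.roots = N + 1 := by rw [hroots']; simp
  have key : Multiset.card q.derivative.roots + S.card ≤ Multiset.card q.roots := by
    calc Multiset.card q.derivative.roots + S.card
        = ∑ s ∈ S, (q.derivative.roots.count s + 1) := by
          rw [Finset.sum_add_distrib, Finset.sum_const, Multiset.toFinset_sum_count_eq]
          simp
      _ = ∑ s ∈ S, q.roots.count s :=
          Finset.sum_congr rfl fun s hs => (hcount s hs).symm
      _ ≤ ∑ s ∈ q.roots.toFinset, q.roots.count s :=
          Finset.sum_le_sum_of_subset hsub
      _ = Multiset.card q.roots := Multiset.toFinset_sum_count_eq _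
  have hcard_le : Multiset.card q.roots ≤ N + 2 :=
    (Polynomial.card_roots' q).trans (natDegree_qq N x)
  have hScard : S.card ≤ 1 := by omega
  have h0S : (0 : ℂ) ∈ S := by
    rw [hSdef, Multiset.mem_toFinset, hroots']
    exact Multiset.mem_cons_self _ _
  have hc0 : ∀ i : Fin N, x i.castSucc = 0 := by
    intro i
    have hiS : x i.castSucc ∈ S := by
      rw [hSdef, Multiset.mem_toFinset, hroots']
      exact Multiset.mem_cons_of_mem (Multiset.mem_map_of_mem _ (Finset.mem_univ i))
    exact Finset.card_le_one.mp hScard _ hiS _ h0S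
  have ha : x (Fin.last N) = 0 := by
    have heval : q.eval 0 = (x (Fin.last N)) ^ (N + 2) := by
      simp only [hqdef, qq, Polynomial.eval_add, Polynomial.eval_mul, Polynomial.eval_pow,
        Polynomial.eval_X, Polynomial.eval_C, Polynomial.eval_finset_sum]
      rw [Finset.sum_eq_zero, zero_pow (by omega : N + 2 ≠ 0)]
      · ring
      · intro j hj
        have := Finset.mem_Icc.mp hj
        simp [zero_pow (show j ≠ 0 by omega)]
    have hpow : (x (Fin.last N)) ^ (N + 2) = 0 := by rw [← heval]; exact heval0
    exact pow_eq_zero_iff (by omega : N + 2 ≠ 0) |>.mp hpow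
  funext i
  show x i = 0
  exact Fin.lastCases ha hc0 i

/-- each `P_{c,a}(c_i)`, viewed as a polynomial in `(c_1, …, c_{d-2}, a)` with
rational coefficients, is homogeneous of degree `d`, and the `d-1` polynomials
`P_{c,a}(c_0), …, P_{c,a}(c_{d-2})` have no common zero in `ℂ^{d-1}` other than the origin. -/
theorem statement0 (N : ℕ) (i : Fin (N + 1)) :
    (PMv N (critMv N i)).IsHomogeneous (N + 2) ∧
    ∀ x : Fin (N + 1) → ℂ,
      (∀ j : Fin (N + 1), MvPolynomial.aeval x (PMv N (critMv N j)) = 0) → x = 0 := by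
  exact ⟨PMv_homog N (critMv_homog N i), common_zero N⟩
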